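/- Main-factorization identity for the β-coefficients at λ = k − n/2 (used in the proof of Theorem 5.8/MainFactOdd1): for every natural number n ≥ 2, all natural numbers N ≥ 1 and k with 1 ≤ k ≤ N, and every i with 0 ≤ i ≤ N: if i < k then β_i^{(N)}(k − n/2) = 0, and if i ≥ k then β_i^{(N)}(k − n/2) = β_{i−k}^{(N−k)}(−k − n/2). -/

import Mathlib

open Finset Polynomial

noncomputable def aC (n N j : ℕ) (l : ℂ) : ℂ :=
  (-2 : ℂ) ^ (N - j) *
    ((N.factorial : ℂ) / ((j.factorial : ℂ) * ((2 * N - 2 * j).factorial : ℂ))) *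
    ∏ k ∈ Finset.Ico j N, (2 * l - 4 * (N : ℂ) + 2 * (k : ℂ) + (n : ℂ) + 1)

noncomputable def bC (n N j : ℕ) (l : ℂ) : ℂ :=
  (-2 : ℂ) ^ (N - j) *
    ((N.factorial : ℂ) / ((j.factorial : ℂ) * ((2 * N - 2 * j + 1).factorial : ℂ))) *
    ∏ k ∈ Finset.Ico j N, (2 * l - 4 * (N : ℂ) + 2 * (k : ℂ) + (n : ℂ) - 1)

noncomputable def bCZ (n M : ℕ) (j : ℤ) (l : ℂ) : ℂ :=
  if 0 ≤ j ∧ j ≤ (M : ℤ) then bC n M j.toNat l else 0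

noncomputable def alphaC (n N i : ℕ) (l : ℂ) : ℂ :=
  (-1 : ℂ) ^ i * 2 ^ N * ((N.factorial : ℂ) / ((2 * N).factorial : ℂ)) * (N.choose i : ℂ) *
    (∏ k ∈ Finset.Icc (i + 1) N, (2 * l + (n : ℂ) - 2 * (k : ℂ))) *
    ∏ k ∈ Finset.Icc 1 i, (2 * l + (n : ℂ) - 2 * (k : ℂ) - 2 * (N : ℂ) + 1)

noncomputable def betaC (n N i : ℕ) (l : ℂ) : ℂ :=
  (-1 : ℂ) ^ i * 2 ^ N * ((N.factorial : ℂ) / ((2 * N + 1).factorial : ℂ)) * (N.choose i : ℂ) *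
    (∏ k ∈ Finset.Icc (i + 1) N, (2 * l + (n : ℂ) - 2 * (k : ℂ))) *
    ∏ k ∈ Finset.Icc 1 i, (2 * l + (n : ℂ) - 2 * (k : ℂ) - 2 * (N : ℂ) - 1)

noncomputable def gammaC (n N i : ℕ) (l p : ℂ) : ℂ :=
  (-1 : ℂ) ^ i * 2 ^ N *
    ((N.factorial : ℂ) / (((N : ℂ) + 1) * ((2 * N + 1).factorial : ℂ))) *
    ((N + 1).choose i : ℂ) *
    ((l + p - 2 * (N : ℂ) - 1) * ((N : ℂ) + 1) * (2 * l + (n : ℂ) - 2 * (i : ℂ)) +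
      (l + (n : ℂ) - p) * (2 * (N : ℂ) + 1) * ((N : ℂ) - (i : ℂ) + 1)) *
    (∏ k ∈ Finset.Icc (i + 1) N, (2 * l + (n : ℂ) - 2 * (k : ℂ))) *
    ∏ k ∈ Finset.Icc 1 (i - 1), (2 * l + (n : ℂ) - 2 * (k : ℂ) - 2 * (N : ℂ) - 1)

noncomputable def poch (a : ℂ) (l : ℕ) : ℂ :=
  ∏ m ∈ Finset.range l, (a + (m : ℂ))

lemma fact_prod (a b : ℕ) (h : a ≤ b) :
    a.factorial * ∏ j ∈ Icc (a+1) b, j = b.factorial := by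
  induction b, h using Nat.le_induction with
  | base => simp
  | succ b hab ih =>
      rw [Finset.prod_Icc_succ_top (by omega), ← mul_assoc, ih, Nat.factorial_succ]
      ring

lemma prod_shift (a b k : ℕ) (f : ℕ → ℕ) :
    ∏ j ∈ Icc (a+k) (b+k), f j = ∏ j ∈ Icc a b, f (j+k) := by
  rw [← Finset.map_add_right_Icc, Finset.prod_map]
  rfl

lemma L2 (N k : ℕ) (h : k ≤ N) :
    2^k * N.factorial * (2*(N-k)+1).factorial * ∏ m ∈ range k, (2*(N-m)+1)
      = (N-k).factorial * (2*N+1).factorial := by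
  induction k with
  | zero => simp
  | succ k ih =>
      have hk : k ≤ N := by omega
      have ih := ih hk
      rw [Finset.prod_range_succ]
      set P := ∏ m ∈ range k, (2*(N-m)+1) with hP
      have hM : N - k = (N - (k+1)) + 1 := by omega
      set M := N - (k+1) with hMdef
      apply Nat.eq_of_mul_eq_mul_left (Nat.succ_pos M)
      have h1 : 2*(N-k)+1 = 2*M+3 := by omega
      have hf : (2*M+3).factorial = (2*M+3) * ((2*M+2) * (2*M+1).factorial) := by
        rw [show 2*M+3 = (2*M+2)+1 by ring, Nat.factorial_succ,
          show 2*M+2 = (2*M+1)+1 by ring, Nat.factorial_succ]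
      have ih2 : 2^k * N.factorial * ((2*M+3) * ((2*M+2) * (2*M+1).factorial)) * P
          = (M+1).factorial * (2*N+1).factorial := by
        rw [← hf, ← h1, ← hM]; exact ih
      have h2 : 2*(N-(k+1))+1 = 2*M+1 := by omega
      rw [h2, h1, Nat.factorial_succ] at *
      calc (M+1) * (2^(k+1) * N.factorial * (2*M+1).factorial * (P * (2*M+3)))
          = 2^k * N.factorial * ((2*M+3) * ((2*M+2) * (2*M+1).factorial)) * P := by ring
        _ = (M+1) * M.factorial * (2*N+1).factorial := ih2
        _ = (M+1) * (M.factorial * (2*N+1).factorial) := by ring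

lemma L1 (N k i : ℕ) (hk : k ≤ i) (hi : i ≤ N) :
    N.choose i * ∏ j ∈ Icc (i+1) N, (j-k) = (N-k).choose (i-k) * ∏ j ∈ Icc (i+1) N, j := by
  have hc1 : ∏ j ∈ Icc (i+1) N, (j-k) = ∏ j ∈ Icc (i-k+1) (N-k), j := by
    have := prod_shift (i-k+1) (N-k) k (fun j => j - k)
    rw [show i-k+1+k = i+1 by omega, show N-k+k = N by omega] at this
    rw [this]
    exact Finset.prod_congr rfl fun j _ => by omega
  have h1 : (i-k).factorial * ∏ j ∈ Icc (i-k+1) (N-k), j = (N-k).factorial :=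
    fact_prod _ _ (by omega)
  have h2 : i.factorial * ∏ j ∈ Icc (i+1) N, j = N.factorial := fact_prod _ _ hi
  apply Nat.eq_of_mul_eq_mul_right
    (show 0 < i.factorial * (N-i).factorial * (i-k).factorial by positivity)
  have hch1 : N.choose i * i.factorial * (N-i).factorial = N.factorial :=
    Nat.choose_mul_factorial_mul_factorial hi
  have hch2 : (N-k).choose (i-k) * (i-k).factorial * (N-i).factorial = (N-k).factorial := by
    have := Nat.choose_mul_factorial_mul_factorial (show i-k ≤ N-k by omega)
    rwa [show N-k-(i-k) = N-i by omega] at this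
  calc N.choose i * (∏ j ∈ Icc (i+1) N, (j-k)) * (i.factorial * (N-i).factorial * (i-k).factorial)
      = (N.choose i * i.factorial * (N-i).factorial) *
        ((i-k).factorial * ∏ j ∈ Icc (i-k+1) (N-k), j) := by rw [hc1]; ring
    _ = N.factorial * (N-k).factorial := by rw [hch1, h1]
    _ = ((N-k).choose (i-k) * (i-k).factorial * (N-i).factorial) *
        (i.factorial * ∏ j ∈ Icc (i+1) N, j) := by rw [hch2, h2]; ring
    _ = (N-k).choose (i-k) * (∏ j ∈ Icc (i+1) N, j) *
        (i.factorial * (N-i).factorial * (i-k).factorial) := by ring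

lemma prod_split_d (N k i : ℕ) (hk1 : 1 ≤ k) (hki : k ≤ i) :
    ∏ j ∈ Icc 1 i, (2*(N+j-k)+1)
      = (∏ m ∈ range k, (2*(N-m)+1)) * ∏ j ∈ Icc 1 (i-k), (2*(N+j)+1) := by
  have hsplit := Finset.prod_Ioc_consecutive (fun j => 2*(N+j-k)+1) (Nat.zero_le k) hki
  rw [show Icc 1 i = Ioc 0 i from Finset.Icc_add_one_left_eq_Ioc 0 i, ← hsplit]
  congr 1
  · have h0 : Ioc 0 k = Icc 1 k := (Finset.Icc_add_one_left_eq_Ioc 0 k).symm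
    have h1 := prod_shift 0 (k-1) 1 (fun j => 2*(N+j-k)+1)
    rw [show 0+1 = 1 by rfl, show k-1+1 = k by omega] at h1
    have h2 : Icc 0 (k-1) = range k := by ext x; simp [Finset.mem_range]; omega
    rw [h0, h1, h2, ← Finset.prod_range_reflect (fun m => 2*(N-m)+1) k]
    exact Finset.prod_congr rfl fun j hj => by
      rw [Finset.mem_range] at hj; congr 1; omega
  · have h0 : Ioc k i = Icc (k+1) i := (Finset.Icc_add_one_left_eq_Ioc k i).symm
    have h1 := prod_shift 1 (i-k) k (fun j => 2*(N+j-k)+1)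
    rw [show 1+k = k+1 by omega, show i-k+k = i by omega] at h1
    rw [h0, h1]
    exact Finset.prod_congr rfl fun j hj => by
      rw [Finset.mem_Icc] at hj; congr 1; omega

theorem beta_main_factorization_first (n : ℕ) (hn : 2 ≤ n) (N k : ℕ) (hN : 1 ≤ N)
    (hk1 : 1 ≤ k) (hkN : k ≤ N) (i : ℕ) (hi : i ≤ N) :
    (i < k → betaC n N i ((k : ℂ) - (n : ℂ) / 2) = 0) ∧
    (k ≤ i → betaC n N i ((k : ℂ) - (n : ℂ) / 2)
        = betaC n (N - k) (i - k) (-(k : ℂ) - (n : ℂ) / 2)) := by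
  constructor
  · intro hik
    have hmem : k ∈ Icc (i+1) N := by rw [Finset.mem_Icc]; omega
    have hz : (2 * ((k:ℂ) - (n:ℂ)/2) + (n:ℂ) - 2*(k:ℂ)) = 0 := by ring
    unfold betaC
    rw [Finset.prod_eq_zero hmem hz]
    ring
  · intro hki
    unfold betaC
    -- nat products
    set c1 := ∏ j ∈ Icc (i+1) N, (j-k) with hc1
    set c2 := ∏ j ∈ Icc (i+1) N, j with hc2
    set e := ∏ m ∈ range k, (2*(N-m)+1) with he
    set d2 := ∏ j ∈ Icc 1 (i-k), (2*(N+j)+1) with hd2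
    have hcard1 : (Icc (i+1) N).card = N - i := by rw [Nat.card_Icc]; omega
    have hcard2 : (Icc (i-k+1) (N-k)).card = N - i := by rw [Nat.card_Icc]; omega
    have hcard3 : (Icc 1 i).card = i := by rw [Nat.card_Icc]; omega
    have hcard4 : (Icc 1 (i-k)).card = i - k := by rw [Nat.card_Icc]; omega
    have hP1 : ∏ j ∈ Icc (i+1) N, (2 * ((k:ℂ) - (n:ℂ)/2) + (n:ℂ) - 2*(j:ℂ))
        = (-2)^(N-i) * (c1 : ℂ) := by
      calc ∏ j ∈ Icc (i+1) N, (2 * ((k:ℂ) - (n:ℂ)/2) + (n:ℂ) - 2*(j:ℂ))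
          = ∏ j ∈ Icc (i+1) N, ((-2) * (((j - k : ℕ) : ℂ))) := by
            refine Finset.prod_congr rfl fun j hj => ?_
            rw [Finset.mem_Icc] at hj
            rw [Nat.cast_sub (show k ≤ j by omega)]
            ring
        _ = (-2)^(N-i) * (c1 : ℂ) := by
            rw [Finset.prod_mul_distrib, Finset.prod_const, hcard1, hc1, Nat.cast_prod]
    have hQ1 : ∏ j ∈ Icc (i-k+1) (N-k), (2 * (-(k:ℂ) - (n:ℂ)/2) + (n:ℂ) - 2*(j:ℂ))
        = (-2)^(N-i) * (c2 : ℂ) := by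
      have hre : c2 = ∏ j ∈ Icc (i-k+1) (N-k), (j+k) := by
        have h := prod_shift (i-k+1) (N-k) k (fun j => j)
        rw [show i-k+1+k = i+1 by omega, show N-k+k = N by omega] at h
        rw [hc2]; exact h
      calc ∏ j ∈ Icc (i-k+1) (N-k), (2 * (-(k:ℂ) - (n:ℂ)/2) + (n:ℂ) - 2*(j:ℂ))
          = ∏ j ∈ Icc (i-k+1) (N-k), ((-2) * (((j + k : ℕ) : ℂ))) := by
            refine Finset.prod_congr rfl fun j hj => ?_
            push_cast
            ring
        _ = (-2)^(N-i) * (c2 : ℂ) := by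
            rw [Finset.prod_mul_distrib, Finset.prod_const, hcard2, hre, Nat.cast_prod]
    have hP2 : ∏ j ∈ Icc 1 i, (2 * ((k:ℂ) - (n:ℂ)/2) + (n:ℂ) - 2*(j:ℂ) - 2*(N:ℂ) - 1)
        = (-1)^i * ((∏ j ∈ Icc 1 i, (2*(N+j-k)+1) : ℕ) : ℂ) := by
      calc ∏ j ∈ Icc 1 i, (2 * ((k:ℂ) - (n:ℂ)/2) + (n:ℂ) - 2*(j:ℂ) - 2*(N:ℂ) - 1)
          = ∏ j ∈ Icc 1 i, ((-1) * (((2*(N+j-k)+1 : ℕ) : ℂ))) := by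
            refine Finset.prod_congr rfl fun j hj => ?_
            rw [Finset.mem_Icc] at hj
            have hle : k ≤ N + j := by omega
            push_cast [Nat.cast_sub hle]
            ring
        _ = (-1)^i * ((∏ j ∈ Icc 1 i, (2*(N+j-k)+1) : ℕ) : ℂ) := by
            rw [Finset.prod_mul_distrib, Finset.prod_const, hcard3, Nat.cast_prod]
    have hQ2 : ∏ j ∈ Icc 1 (i-k), (2 * (-(k:ℂ) - (n:ℂ)/2) + (n:ℂ) - 2*(j:ℂ) - 2*((N-k:ℕ):ℂ) - 1)
        = (-1)^(i-k) * (d2 : ℂ) := by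
      calc ∏ j ∈ Icc 1 (i-k), (2 * (-(k:ℂ) - (n:ℂ)/2) + (n:ℂ) - 2*(j:ℂ) - 2*((N-k:ℕ):ℂ) - 1)
          = ∏ j ∈ Icc 1 (i-k), ((-1) * (((2*(N+j)+1 : ℕ) : ℂ))) := by
            refine Finset.prod_congr rfl fun j hj => ?_
            push_cast [Nat.cast_sub hkN]
            ring
        _ = (-1)^(i-k) * (d2 : ℂ) := by
            rw [Finset.prod_mul_distrib, Finset.prod_const, hcard4, hd2, Nat.cast_prod]
    rw [hP1, hQ1, hP2, hQ2, prod_split_d N k i hk1 hki, ← he, ← hd2]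
    -- key cast identity
    have hkeyN : (2^k * N.factorial * (2*(N-k)+1).factorial * e) * (N.choose i * c1)
        = ((N-k).factorial * (2*N+1).factorial) * ((N-k).choose (i-k) * c2) := by
      rw [L2 N k hkN, L1 N k i hki hi]
    have hkey : ((2:ℂ)^k * (N.factorial:ℂ) * ((2*(N-k)+1).factorial:ℂ) * (e:ℂ)) *
          ((N.choose i : ℂ) * (c1:ℂ))
        = (((N-k).factorial:ℂ) * ((2*N+1).factorial:ℂ)) *
          (((N-k).choose (i-k) : ℂ) * (c2:ℂ)) := by exact_mod_cast hkeyN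
    have hs1 : ((-1:ℂ)^i) * ((-1:ℂ)^i) = 1 := by
      rw [← pow_add, ← two_mul, pow_mul, neg_one_sq, one_pow]
    have hs2 : ((-1:ℂ)^(i-k)) * ((-1:ℂ)^(i-k)) = 1 := by
      rw [← pow_add, ← two_mul, pow_mul, neg_one_sq, one_pow]
    have h2k : (2:ℂ)^(N-k) * 2^k = 2^N := pow_sub_mul_pow 2 hkN
    have hf1 : ((2*N+1).factorial : ℂ) ≠ 0 := Nat.cast_ne_zero.2 (Nat.factorial_ne_zero _)
    have hf2 : ((2*(N-k)+1).factorial : ℂ) ≠ 0 := Nat.cast_ne_zero.2 (Nat.factorial_ne_zero _)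
    rw [Nat.cast_mul]
    clear_value c1 c2 e d2
    clear hc1 hc2 he hd2 hP1 hQ1 hP2 hQ2 hkeyN hcard1 hcard2 hcard3 hcard4
    field_simp
    linear_combination
      ((2:ℂ)^N * (N.factorial:ℂ) * (N.choose i:ℂ) * (c1:ℂ) * (e:ℂ) *
        ((2*(N-k)+1).factorial:ℂ) * (d2:ℂ)) * hs1
      - ((2:ℂ)^(N-k) * ((N-k).factorial:ℂ) * (((N-k).choose (i-k)):ℂ) * (c2:ℂ) *
        ((2*N+1).factorial:ℂ) * (d2:ℂ)) * hs2
      + ((2:ℂ)^(N-k) * (d2:ℂ)) * hkey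
      - ((N.factorial:ℂ) * (N.choose i:ℂ) * (c1:ℂ) * (e:ℂ) *
        ((2*(N-k)+1).factorial:ℂ) * (d2:ℂ)) * h2k
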